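/- (Proposition 3.8) Suppose a discrete form Ω : ℤ⁴ → Cl satisfies equation (3.17): −DΩ = mΩe. Then Ω = ΩP_{−e} + ΩP_{+e}, where ΩP_{−e} satisfies the discrete Dirac–Kähler equation iD(ΩP_{−e}) = m(ΩP_{−e}), while ΩP_{+e} satisfies the same equation with reversed mass sign: iD(ΩP_{+e}) = −m(ΩP_{+e}). -/
import Mathlib


noncomputable section

/-- The Minkowski quadratic form `Q v = v₀² − v₁² − v₂² − v₃²` on `ℂ⁴`. -/
def Q : QuadraticForm ℂ (Fin 4 → ℂ) :=
  QuadraticMap.weightedSumSquares ℂ ![(1 : ℂ), -1, -1, -1]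

/-- The Clifford algebra of spacetime over `ℂ`. -/
abbrev Cl : Type := CliffordAlgebra Q

/-- The generators `e_μ`, images of the standard basis vectors. -/
def e (μ : Fin 4) : Cl := CliffordAlgebra.ι Q (Pi.single μ 1)

/-- The volume element `e = e₀e₁e₂e₃`. -/
def eV : Cl := e 0 * e 1 * e 2 * e 3

/-- The difference operator `(Δ_μ Ω)(k) = Ω(k + 1_μ) − Ω(k)`. -/
def Δ (μ : Fin 4) (Ω : (Fin 4 → ℤ) → Cl) : (Fin 4 → ℤ) → Cl :=
  fun k => Ω (k + Pi.single μ 1) - Ω k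

/-- The discrete Dirac operator `DΩ = Σ_μ e_μ · (Δ_μ Ω)`. -/
def Dirac (Ω : (Fin 4 → ℤ) → Cl) : (Fin 4 → ℤ) → Cl :=
  fun k => ∑ μ : Fin 4, e μ * Δ μ Ω k

def Pep : Cl := (2⁻¹ : ℂ) • (1 + Complex.I • eV)
def Pem : Cl := (2⁻¹ : ℂ) • (1 - Complex.I • eV)

lemma Q_single (μ : Fin 4) : Q (Pi.single μ 1) = ![(1:ℂ),-1,-1,-1] μ := by
  simp [Q, QuadraticMap.weightedSumSquares_apply, Pi.single_apply]

lemma polar_single (μ ν : Fin 4) (h : μ ≠ ν) :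
    QuadraticMap.polar Q (Pi.single μ 1) (Pi.single ν 1) = 0 := by
  simp only [Q, QuadraticMap.polar, QuadraticMap.weightedSumSquares_apply]
  rw [← Finset.sum_sub_distrib, ← Finset.sum_sub_distrib]
  apply Finset.sum_eq_zero
  intro i _
  rcases eq_or_ne i μ with rfl | hμ <;> rcases eq_or_ne i ν with rfl | hν <;>
    simp_all [Pi.single_apply]

lemma e_swap (μ ν : Fin 4) (h : μ ≠ ν) : e μ * e ν = -(e ν * e μ) := by
  have := CliffordAlgebra.ι_mul_ι_add_swap (Q := Q) (Pi.single μ 1) (Pi.single ν 1)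
  rw [polar_single μ ν h] at this
  simp only [map_zero] at this
  have h0 : e μ * e ν + e ν * e μ = 0 := this
  have := eq_neg_of_add_eq_zero_left h0
  simpa using this

lemma e0_sq : e 0 * e 0 = 1 := by
  have := CliffordAlgebra.ι_sq_scalar (Q := Q) (Pi.single 0 1)
  rw [Q_single] at this; simpa [e] using this

lemma e_sq_neg (μ : Fin 4) (h : μ ≠ 0) : e μ * e μ = -1 := by
  have := CliffordAlgebra.ι_sq_scalar (Q := Q) (Pi.single μ 1)
  rw [Q_single] at this
  fin_cases μ <;> simp_all [e]

-- assoc-form simp lemmas for sorting products of generators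
lemma sw (μ ν : Fin 4) (h : μ ≠ ν) (x : Cl) : e μ * (e ν * x) = -(e ν * (e μ * x)) := by
  rw [← mul_assoc, e_swap μ ν h, ← mul_assoc]; simp

lemma sq0 (x : Cl) : e 0 * (e 0 * x) = x := by rw [← mul_assoc, e0_sq, one_mul]
lemma sqn (μ : Fin 4) (h : μ ≠ 0) (x : Cl) : e μ * (e μ * x) = -x := by
  rw [← mul_assoc, e_sq_neg μ h]; simp

lemma eV_sq : eV * eV = -1 := by
  have s10 := sw 1 0 (by decide)
  have s20 := sw 2 0 (by decide)
  have s30 := sw 3 0 (by decide)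
  have s21 := sw 2 1 (by decide)
  have s31 := sw 3 1 (by decide)
  have s32 := sw 3 2 (by decide)
  have q1 := sqn 1 (by decide)
  have q2 := sqn 2 (by decide)
  have q3 := sqn 3 (by decide)
  have q1' : e 1 * e 1 = -1 := e_sq_neg 1 (by decide)
  have q2' : e 2 * e 2 = -1 := e_sq_neg 2 (by decide)
  have q3' : e 3 * e 3 = -1 := e_sq_neg 3 (by decide)
  simp only [eV, mul_assoc]
  simp only [s10, s20, s30, s21, s31, s32, sq0, q1, q2, q3, e0_sq, q1', q2', q3', mul_neg,
    neg_neg, mul_one]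

lemma eV_Pem : eV * Pem = Complex.I • Pem := by
  simp only [Pem, mul_smul_comm, mul_sub, mul_one, eV_sq]
  match_scalars <;> (ring_nf; try simp only [Complex.I_sq]; try norm_num)

lemma eV_Pep : eV * Pep = -(Complex.I • Pep) := by
  simp only [Pep, mul_smul_comm, mul_add, mul_one, eV_sq]
  match_scalars <;> (ring_nf; try simp only [Complex.I_sq]; try norm_num)

lemma Pem_add_Pep : Pem + Pep = 1 := by
  simp only [Pem, Pep, smul_sub, smul_add]
  rw [sub_add_add_cancel, ← two_smul ℂ, smul_smul]
  norm_num

lemma Dirac_mul (Ω : (Fin 4 → ℤ) → Cl) (c : Cl) (k : Fin 4 → ℤ) :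
    Dirac (fun k => Ω k * c) k = Dirac Ω k * c := by
  simp only [Dirac, Δ, Finset.sum_mul, sub_mul, mul_assoc]

/-- Proposition 3.8: a solution `Ω` of `−DΩ = mΩe` decomposes as
`Ω = ΩP_{−e} + ΩP_{+e}`, where `ΩP_{−e}` satisfies the discrete Dirac–Kähler
equation and `ΩP_{+e}` satisfies it with reversed mass sign. -/
theorem stmt_13 (m : ℝ) (Ω : (Fin 4 → ℤ) → Cl)
    (hΩ : ∀ k, -(Dirac Ω k) = (m : ℂ) • (Ω k * eV)) :
    (∀ k, Ω k = Ω k * Pem + Ω k * Pep) ∧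
    (∀ k, Complex.I • Dirac (fun k => Ω k * Pem) k = (m : ℂ) • (Ω k * Pem)) ∧
    (∀ k, Complex.I • Dirac (fun k => Ω k * Pep) k = -((m : ℂ) • (Ω k * Pep))) := by
  refine ⟨fun k => by rw [← mul_add, Pem_add_Pep, mul_one], fun k => ?_, fun k => ?_⟩
  · have h := hΩ k
    rw [Dirac_mul]
    have : Dirac Ω k = -((m : ℂ) • (Ω k * eV)) := by rw [← h, neg_neg]
    rw [this]
    rw [neg_mul, smul_mul_assoc, mul_assoc, eV_Pem, mul_smul_comm]
    have hs : Complex.I * ((m:ℂ) * Complex.I) = -(m:ℂ) := by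
      have h2 : (Complex.I : ℂ)^2 = -1 := Complex.I_sq
      linear_combination (m:ℂ) * h2
    simp only [smul_neg, smul_smul]
    rw [hs, neg_smul, neg_neg]
  · have h := hΩ k
    rw [Dirac_mul]
    have : Dirac Ω k = -((m : ℂ) • (Ω k * eV)) := by rw [← h, neg_neg]
    rw [this]
    rw [neg_mul, smul_mul_assoc, mul_assoc, eV_Pep, mul_neg, mul_smul_comm]
    have hs : Complex.I * ((m:ℂ) * Complex.I) = -(m:ℂ) := by
      have h2 : (Complex.I : ℂ)^2 = -1 := Complex.I_sq
      linear_combination (m:ℂ) * h2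
    simp only [smul_neg, neg_neg, smul_smul]
    rw [hs, neg_smul]
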